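/- Let Ω be a compact metric space, T a homeomorphism, f: Ω → 𝔻 continuous, and z ∈ ∂𝔻. Define the Szegő cocycle A_z(ω) = S(f(ω),z) and the Gesztesy–Zinchenko cocycle G_z(ω) = Q(f(Tω),z)·P(f(ω),z). Then (T, A_z) is uniformly hyperbolic if and only if (T², G_z) is uniformly hyperbolic. -/

import Mathlib

set_option maxHeartbeats 1000000
set_option synthInstance.maxHeartbeats 400000

noncomputable section

abbrev E2 := EuclideanSpace ℂ (Fin 2)
abbrev M2 := Matrix (Fin 2) (Fin 2) ℂ

noncomputable def opNorm (M : M2) : ℝ :=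
  ‖Matrix.toEuclideanCLM (𝕜 := ℂ) (n := Fin 2) M‖

noncomputable def mulV (M : M2) (v : E2) : E2 :=
  Matrix.toEuclideanCLM (𝕜 := ℂ) (n := Fin 2) M v

variable {Ω : Type*} [MetricSpace Ω]

noncomputable def fwd (T : Ω ≃ₜ Ω) (A : Ω → M2) : ℕ → Ω → M2
  | 0, _ => 1
  | n + 1, ω => fwd T A n (T ω) * A ω

noncomputable def coc (T : Ω ≃ₜ Ω) (A : Ω → M2) (n : ℤ) (ω : Ω) : M2 :=
  if 0 ≤ n then fwd T A n.toNat ω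
  else (fwd T A (-n).toNat ((⇑T.symm)^[(-n).toNat] ω))⁻¹
/-- `ρ_α = (1 − |α|²)^{1/2}`, as a complex number. -/
noncomputable def rho (α : ℂ) : ℂ := ((Real.sqrt (1 - ‖α‖ ^ 2) : ℝ) : ℂ)

/-- The Szegő transfer matrix `S(α,z)`. -/
noncomputable def Smat (α z : ℂ) : M2 :=
  (rho α)⁻¹ • !![z, -(starRingEnd ℂ) α; -α * z, 1]

/-- The Gesztesy–Zinchenko matrix `P(α,z)`. -/
noncomputable def Pmat (α z : ℂ) : M2 :=
  (rho α)⁻¹ • !![-α, z⁻¹; z, -(starRingEnd ℂ) α]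

/-- The Gesztesy–Zinchenko matrix `Q(α,z)`. -/
noncomputable def Qmat (α z : ℂ) : M2 :=
  (rho α)⁻¹ • !![-(starRingEnd ℂ) α, 1; 1, -α]

/-- Uniform hyperbolicity as uniform exponential growth of the cocycle. -/
def UnifHyp (T : Ω ≃ₜ Ω) (A : Ω → M2) : Prop :=
  ∃ (C : ℝ) (lam : ℝ), 0 < C ∧ 1 < lam ∧
    ∀ (n : ℤ) (ω : Ω), C * lam ^ n.natAbs ≤ opNorm (coc T A n ω)

/-! ### Operator norm lemmas -/

lemma opNorm_smul (c : ℂ) (M : M2) : opNorm (c • M) = ‖c‖ * opNorm M := by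
  unfold opNorm
  rw [map_smul]
  have := norm_smul (α := ℂ) (β := E2 →L[ℂ] E2) c
    (Matrix.toEuclideanCLM (𝕜 := ℂ) (n := Fin 2) M)
  rw [this]

lemma opNorm_mul_le (M N : M2) : opNorm (M * N) ≤ opNorm M * opNorm N := by
  unfold opNorm
  rw [map_mul]
  exact norm_mul_le _ _

lemma opNorm_nonneg (M : M2) : 0 ≤ opNorm M := norm_nonneg _

lemma opNorm_one : opNorm 1 = 1 := by
  unfold opNorm
  rw [map_one]
  exact norm_one

noncomputable def phiCLM : M2 →ₗ[ℂ] (E2 →L[ℂ] E2) where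
  toFun M := Matrix.toEuclideanCLM (𝕜 := ℂ) (n := Fin 2) M
  map_add' x y := map_add _ x y
  map_smul' c x := map_smul _ c x

lemma opNorm_continuous : Continuous opNorm := by
  have h : Continuous phiCLM := LinearMap.continuous_of_finiteDimensional phiCLM
  exact h.norm

lemma matrix_smul_inv {c : ℂ} (hc : c ≠ 0) {M : M2} (hM : IsUnit M.det) :
    (c • M)⁻¹ = c⁻¹ • M⁻¹ := by
  have hd : M.det ≠ 0 := hM.ne_zero
  rw [Matrix.inv_def, Matrix.inv_def, Matrix.det_smul, Matrix.adjugate_smul,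
    smul_smul, smul_smul]
  congr 1
  simp only [Fintype.card_fin, pow_one, Ring.inverse_eq_inv']
  field_simp
  ring

/-! ### rho lemmas -/

lemma rho_pos {α : ℂ} (h : ‖α‖ < 1) : 0 < Real.sqrt (1 - ‖α‖ ^ 2) := by
  apply Real.sqrt_pos.2
  nlinarith [norm_nonneg α]

lemma rho_ne {α : ℂ} (h : ‖α‖ < 1) : rho α ≠ 0 := by
  simp only [rho, ne_eq, Complex.ofReal_eq_zero]
  exact ne_of_gt (rho_pos h)

lemma rho_sq {α : ℂ} (h : ‖α‖ < 1) :
    rho α * rho α = 1 - (starRingEnd ℂ) α * α := by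
  have h1 : (0:ℝ) ≤ 1 - ‖α‖ ^ 2 := by nlinarith [norm_nonneg α]
  have h2 : (Real.sqrt (1 - ‖α‖ ^ 2)) * (Real.sqrt (1 - ‖α‖ ^ 2))
      = 1 - ‖α‖ ^ 2 := Real.mul_self_sqrt h1
  rw [rho, ← Complex.ofReal_mul, h2]
  rw [show 1 - ‖α‖ ^ 2 = 1 - Complex.normSq α by rw [Complex.sq_norm]]
  push_cast [Complex.normSq_eq_conj_mul_self]
  ring

/-! ### Matrix identities -/

lemma S_mul_S (α β z : ℂ) (hz : z ≠ 0) :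
    Smat α z * Smat β z = z • (Qmat α z * Pmat β z) := by
  ext i j
  fin_cases i <;> fin_cases j <;>
    simp [Smat, Qmat, Pmat, Matrix.mul_apply, Fin.sum_univ_two] <;>
    generalize (rho α)⁻¹ = u <;> generalize (rho β)⁻¹ = v <;>
    (try field_simp) <;> (try ring)

/-- Explicit inverse of the Szegő matrix. -/
noncomputable def Sinv (α z : ℂ) : M2 :=
  (rho α)⁻¹ • !![z⁻¹, (starRingEnd ℂ) α * z⁻¹; α, 1]

lemma S_mul_Sinv {α z : ℂ} (hα : ‖α‖ < 1) (hz : z ≠ 0) :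
    Smat α z * Sinv α z = 1 := by
  have hr := rho_ne hα
  have hs := rho_sq hα
  ext i j
  fin_cases i <;> fin_cases j <;>
    simp [Smat, Sinv, Matrix.mul_apply, Fin.sum_univ_two, Matrix.one_apply] <;>
    field_simp
  all_goals first
    | linear_combination (-(z * rho α * rho α)) * hs
    | linear_combination (-1 : ℂ) * hs
    | ring

lemma Smat_inv {α z : ℂ} (hα : ‖α‖ < 1) (hz : z ≠ 0) :
    (Smat α z)⁻¹ = Sinv α z :=
  Matrix.inv_eq_right_inv (S_mul_Sinv hα hz)

lemma det_Smat {α : ℂ} (hα : ‖α‖ < 1) (z : ℂ) :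
    (Smat α z).det = z := by
  have hr := rho_ne hα
  have hs := rho_sq hα
  simp [Smat, Matrix.det_smul, Matrix.det_fin_two_of]
  field_simp
  linear_combination (-z) * hs

/-! ### Cocycle lemmas -/

lemma fwd_succ (T : Ω ≃ₜ Ω) (A : Ω → M2) (n : ℕ) (ω : Ω) :
    fwd T A (n+1) ω = fwd T A n (T ω) * A ω := rfl

lemma fwd_succ_left (T : Ω ≃ₜ Ω) (A : Ω → M2) (n : ℕ) (ω : Ω) :
    fwd T A (n+1) ω = A ((⇑T)^[n] ω) * fwd T A n ω := by
  induction n generalizing ω with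
  | zero => simp [fwd]
  | succ n ih =>
    rw [fwd_succ T A (n+1) ω, ih (T ω), fwd_succ T A n ω,
      Function.iterate_succ_apply, mul_assoc]

lemma fwd_even (T : Ω ≃ₜ Ω) (f : Ω → ℂ) {z : ℂ} (hz : z ≠ 0) (n : ℕ) :
    ∀ ω : Ω, fwd T (fun ω => Smat (f ω) z) (2*n) ω
      = z^n • fwd (T.trans T) (fun ω => Qmat (f (T ω)) z * Pmat (f ω) z) n ω := by
  induction n with
  | zero => intro ω; simp [fwd]
  | succ n ih =>
    intro ω
    have h2 : 2*(n+1) = (2*n+1)+1 := by ring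
    rw [h2]
    simp only [fwd_succ, Homeomorph.trans_apply]
    rw [mul_assoc, S_mul_S (f (T ω)) (f ω) z hz, ih (T (T ω)),
      smul_mul_smul_comm, ← pow_succ]

lemma coc_natCast (T : Ω ≃ₜ Ω) (A : Ω → M2) (n : ℕ) (ω : Ω) :
    coc T A (n : ℤ) ω = fwd T A n ω := by
  simp [coc]

lemma coc_negNat (T : Ω ≃ₜ Ω) (A : Ω → M2) (n : ℕ) (ω : Ω) :
    coc T A (-(n : ℤ)) ω = (fwd T A n ((⇑T.symm)^[n] ω))⁻¹ := by
  rcases Nat.eq_zero_or_pos n with rfl | h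
  · simp [coc, fwd]
  · have h1 : ¬ (0 ≤ -(n : ℤ)) := by omega
    simp [coc, h1]
    intro h0; omega

lemma det_fwd_S (T : Ω ≃ₜ Ω) (f : Ω → ℂ) (z : ℂ)
    (hfD : ∀ ω, ‖f ω‖ < 1) (n : ℕ) (ω : Ω) :
    (fwd T (fun ω => Smat (f ω) z) n ω).det = z^n := by
  induction n generalizing ω with
  | zero => simp [fwd]
  | succ n ih =>
    rw [fwd_succ, Matrix.det_mul, ih (T ω)]
    simp only [det_Smat (hfD ω) z, pow_succ]

lemma det_fwd_G (T : Ω ≃ₜ Ω) (f : Ω → ℂ) {z : ℂ} (hz : z ≠ 0)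
    (hfD : ∀ ω, ‖f ω‖ < 1) (n : ℕ) (ω : Ω) :
    (fwd (T.trans T) (fun ω => Qmat (f (T ω)) z * Pmat (f ω) z) n ω).det = 1 := by
  have h := congrArg Matrix.det (fwd_even T f hz n ω)
  rw [det_fwd_S T f z hfD (2*n) ω, Matrix.det_smul, Fintype.card_fin] at h
  have hzn : (z^n)^2 ≠ 0 := pow_ne_zero _ (pow_ne_zero _ hz)
  apply mul_left_cancel₀ hzn
  rw [mul_one, ← h, ← pow_mul, mul_comm n 2]

lemma norm_coc_eq (T : Ω ≃ₜ Ω) (f : Ω → ℂ) {z : ℂ} (hz : ‖z‖ = 1)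
    (hfD : ∀ ω, ‖f ω‖ < 1) (n : ℤ) (ω : Ω) :
    opNorm (coc (T.trans T) (fun ω => Qmat (f (T ω)) z * Pmat (f ω) z) n ω)
      = opNorm (coc T (fun ω => Smat (f ω) z) (2*n) ω) := by
  have hz0 : z ≠ 0 := by
    intro h; rw [h] at hz; simp at hz
  rcases Int.eq_nat_or_neg n with ⟨m, rfl | rfl⟩
  · rw [show (2*(m:ℤ)) = ((2*m : ℕ) : ℤ) by push_cast; ring,
      coc_natCast, coc_natCast, fwd_even T f hz0 m ω, opNorm_smul,
      norm_pow, hz, one_pow, one_mul]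
  · rw [show (2*(-(m:ℤ))) = -((2*m : ℕ) : ℤ) by push_cast; ring,
      coc_negNat, coc_negNat]
    have hiter : (⇑T.symm)^[2*m] ω = (⇑(T.trans T).symm)^[m] ω := by
      rw [Function.iterate_mul]
      congr 1
    rw [hiter, fwd_even T f hz0 m ((⇑(T.trans T).symm)^[m] ω),
      matrix_smul_inv (pow_ne_zero m hz0)
        (by rw [det_fwd_G T f hz0 hfD m]; exact isUnit_one),
      opNorm_smul, norm_inv, norm_pow, hz, one_pow, inv_one, one_mul]

/-! ### Continuity and bounds -/

lemma cont_rho_inv {f : Ω → ℂ} (hf : Continuous f)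
    (hfD : ∀ ω, ‖f ω‖ < 1) :
    Continuous fun ω => (rho (f ω))⁻¹ := by
  apply Continuous.inv₀
  · exact Complex.continuous_ofReal.comp
      (Real.continuous_sqrt.comp
        (continuous_const.sub ((continuous_norm.comp hf).pow 2)))
  · intro ω; exact rho_ne (hfD ω)

lemma cont_S {f : Ω → ℂ} (hf : Continuous f)
    (hfD : ∀ ω, ‖f ω‖ < 1) (z : ℂ) :
    Continuous fun ω => Smat (f ω) z := by
  have h1 := cont_rho_inv hf hfD
  apply continuous_matrix
  intro i j
  fin_cases i <;> fin_cases j <;> simp [Smat]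
  all_goals
    first
    | exact h1.mul continuous_const
    | exact (h1.mul (continuous_star.comp hf)).neg
    | exact (h1.mul (hf.mul continuous_const)).neg
    | exact h1

lemma cont_Sinv {f : Ω → ℂ} (hf : Continuous f)
    (hfD : ∀ ω, ‖f ω‖ < 1) (z : ℂ) :
    Continuous fun ω => Sinv (f ω) z := by
  have h1 := cont_rho_inv hf hfD
  apply continuous_matrix
  intro i j
  fin_cases i <;> fin_cases j <;> simp [Sinv]
  all_goals
    first
    | exact h1.mul continuous_const
    | exact h1.mul ((continuous_star.comp hf).mul continuous_const)
    | exact h1.mul hf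
    | exact h1

lemma exists_bound [CompactSpace Ω] {f : Ω → ℂ} (hf : Continuous f)
    (hfD : ∀ ω, ‖f ω‖ < 1) (z : ℂ) :
    ∃ M : ℝ, 1 ≤ M ∧ (∀ ω, opNorm (Smat (f ω) z) ≤ M) ∧
      (∀ ω, opNorm (Sinv (f ω) z) ≤ M) := by
  have c1 : Continuous fun ω => opNorm (Smat (f ω) z) :=
    opNorm_continuous.comp (cont_S hf hfD z)
  have c2 : Continuous fun ω => opNorm (Sinv (f ω) z) :=
    opNorm_continuous.comp (cont_Sinv hf hfD z)
  obtain ⟨M1, hM1⟩ := (isCompact_range c1).bddAbove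
  obtain ⟨M2, hM2⟩ := (isCompact_range c2).bddAbove
  refine ⟨max (max M1 M2) 1, le_max_right _ _, fun ω => ?_, fun ω => ?_⟩
  · exact le_trans (hM1 ⟨ω, rfl⟩) (le_trans (le_max_left _ _) (le_max_left _ _))
  · exact le_trans (hM2 ⟨ω, rfl⟩) (le_trans (le_max_right _ _) (le_max_left _ _))

/-! ### Main theorem -/

/-- the Szegő cocycle `(T, A_z)`, `A_z(ω) = S(f(ω),z)`, is
uniformly hyperbolic iff the Gesztesy–Zinchenko cocycle `(T², G_z)`,
`G_z(ω) = Q(f(Tω),z) P(f(ω),z)`, is uniformly hyperbolic. -/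
theorem szego_UH_iff_GZ_UH [CompactSpace Ω]
    (T : Ω ≃ₜ Ω) (f : Ω → ℂ) (hf : Continuous f)
    (hfD : ∀ ω, ‖f ω‖ < 1)
    (z : ℂ) (hz : ‖z‖ = 1) :
    UnifHyp T (fun ω => Smat (f ω) z) ↔
      UnifHyp (T.trans T) (fun ω => Qmat (f (T ω)) z * Pmat (f ω) z) := by
  have hz0 : z ≠ 0 := by intro h; rw [h] at hz; simp at hz
  constructor
  · rintro ⟨C, lam, hC, hlam, hb⟩
    refine ⟨C, lam^2, hC, by nlinarith, fun n ω => ?_⟩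
    rw [norm_coc_eq T f hz hfD n ω]
    have h1 := hb (2*n) ω
    have h2 : (2*n).natAbs = 2 * n.natAbs := by rw [Int.natAbs_mul]; rfl
    rw [h2, pow_mul] at h1
    exact h1
  · rintro ⟨C, lam, hC, hlam, hb⟩
    obtain ⟨M, hM1, hMS, hMI⟩ := exists_bound hf hfD z
    have hM0 : (0:ℝ) < M := lt_of_lt_of_le one_pos hM1
    set μ := Real.sqrt lam with hμdef
    have hl0 : (0:ℝ) ≤ lam := by linarith
    have hμsq : μ^2 = lam := Real.sq_sqrt hl0
    have hμ0 : (0:ℝ) ≤ μ := Real.sqrt_nonneg _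
    have hμ1 : 1 < μ := by nlinarith
    refine ⟨C/M, μ, div_pos hC hM0, hμ1, fun n ω => ?_⟩
    have heven : ∀ (k : ℤ) (ω : Ω),
        C * lam ^ k.natAbs ≤ opNorm (coc T (fun ω => Smat (f ω) z) (2*k) ω) := by
      intro k ω
      rw [← norm_coc_eq T f hz hfD k ω]
      exact hb k ω
    have hevenP : ∀ (k : ℕ) (ω : Ω),
        C * lam ^ k ≤ opNorm (fwd T (fun ω => Smat (f ω) z) (2*k) ω) := by
      intro k ω
      have h1 := heven (k:ℤ) ω
      rw [show (2*(k:ℤ)) = ((2*k:ℕ):ℤ) by push_cast; ring, coc_natCast] at h1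
      simpa using h1
    have hevenN : ∀ (k : ℕ) (ω : Ω), C * lam ^ k ≤
        opNorm ((fwd T (fun ω => Smat (f ω) z) (2*k) ((⇑T.symm)^[2*k] ω))⁻¹) := by
      intro k ω
      have h1 := heven (-(k:ℤ)) ω
      rw [show (2*(-(k:ℤ))) = -((2*k:ℕ):ℤ) by push_cast; ring, coc_negNat] at h1
      simpa using h1
    have hmono : ∀ a b : ℕ, a ≤ b → μ^a ≤ μ^b :=
      fun a b h => pow_le_pow_right₀ hμ1.le h
    have hμlam : ∀ m:ℕ, μ^(2*m) = lam^m := fun m => by rw [pow_mul, hμsq]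
    have hCM : C/M ≤ C := div_le_self hC.le hM1
    rcases Int.eq_nat_or_neg n with ⟨k, rfl | rfl⟩
    · rw [coc_natCast]
      simp only [Int.natAbs_natCast]
      rcases Nat.even_or_odd k with ⟨m, rfl⟩ | ⟨m, rfl⟩
      · rw [show m+m = 2*m by ring, hμlam m]
        calc C/M * lam^m ≤ C * lam^m :=
              mul_le_mul_of_nonneg_right hCM (pow_nonneg hl0 m)
          _ ≤ _ := hevenP m ω
      · have h2 := hevenP (m+1) ω
        have hpeel : fwd T (fun ω => Smat (f ω) z) (2*(m+1)) ω
            = Smat (f ((⇑T)^[2*m+1] ω)) z * fwd T (fun ω => Smat (f ω) z) (2*m+1) ω := by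
          rw [show 2*(m+1) = (2*m+1)+1 by ring, fwd_succ_left]
        rw [hpeel] at h2
        have h3 : opNorm (Smat (f ((⇑T)^[2*m+1] ω)) z * fwd T (fun ω => Smat (f ω) z) (2*m+1) ω)
            ≤ M * opNorm (fwd T (fun ω => Smat (f ω) z) (2*m+1) ω) :=
          le_trans (opNorm_mul_le _ _)
            (mul_le_mul_of_nonneg_right (hMS _) (opNorm_nonneg _))
        have h4 := le_trans h2 h3
        rw [div_mul_eq_mul_div, div_le_iff₀ hM0]
        calc C * μ^(2*m+1) ≤ C * μ^(2*(m+1)) :=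
              mul_le_mul_of_nonneg_left (hmono _ _ (by omega)) hC.le
          _ = C * lam^(m+1) := by rw [hμlam (m+1)]
          _ ≤ M * opNorm (fwd T (fun ω => Smat (f ω) z) (2*m+1) ω) := h4
          _ = _ := mul_comm _ _
    · rw [coc_negNat]
      simp only [Int.natAbs_neg, Int.natAbs_natCast]
      rcases Nat.even_or_odd k with ⟨m, rfl⟩ | ⟨m, rfl⟩
      · rw [show m+m = 2*m by ring, hμlam m]
        calc C/M * lam^m ≤ C * lam^m :=
              mul_le_mul_of_nonneg_right hCM (pow_nonneg hl0 m)
          _ ≤ _ := hevenN m ω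
      · have h2 := hevenN (m+1) ω
        have hTσ : T ((⇑T.symm)^[2*m+1+1] ω) = (⇑T.symm)^[2*m+1] ω := by
          rw [Function.iterate_succ_apply']
          exact T.apply_symm_apply _
        have hinv : (fwd T (fun ω => Smat (f ω) z) (2*(m+1)) ((⇑T.symm)^[2*(m+1)] ω))⁻¹
            = (Sinv (f ((⇑T.symm)^[2*m+1+1] ω)) z)
              * (fwd T (fun ω => Smat (f ω) z) (2*m+1) ((⇑T.symm)^[2*m+1] ω))⁻¹ := by
          rw [show 2*(m+1) = (2*m+1)+1 by ring, fwd_succ, hTσ, Matrix.mul_inv_rev,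
            ← Smat_inv (hfD _) hz0]
        rw [hinv] at h2
        have h3 : opNorm ((Sinv (f ((⇑T.symm)^[2*m+1+1] ω)) z)
              * (fwd T (fun ω => Smat (f ω) z) (2*m+1) ((⇑T.symm)^[2*m+1] ω))⁻¹)
            ≤ M * opNorm ((fwd T (fun ω => Smat (f ω) z) (2*m+1) ((⇑T.symm)^[2*m+1] ω))⁻¹) :=
          le_trans (opNorm_mul_le _ _)
            (mul_le_mul_of_nonneg_right (hMI _) (opNorm_nonneg _))
        have h4 := le_trans h2 h3
        rw [div_mul_eq_mul_div, div_le_iff₀ hM0]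
        calc C * μ^(2*m+1) ≤ C * μ^(2*(m+1)) :=
              mul_le_mul_of_nonneg_left (hmono _ _ (by omega)) hC.le
          _ = C * lam^(m+1) := by rw [hμlam (m+1)]
          _ ≤ M * opNorm ((fwd T (fun ω => Smat (f ω) z) (2*m+1) ((⇑T.symm)^[2*m+1] ω))⁻¹) := h4
          _ = _ := mul_comm _ _

end
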